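/- Let n ≥ 1, let p : Fin n → ℝ be a probability vector with p i > 0 for all i, and let L : Fin n → ℝ. For any probability vector q on Fin n define KL(q‖p) = Σ_i q i * log (q i / p i) (with the convention 0 · log 0 = 0). Then for all ε > 0 and κ > 0, sup { Σ_i q i * L i − κ · KL(q‖p) : q a probability vector on Fin n with KL(q‖p) ≤ ε } = inf { λ·ε + (λ+κ) · log (Σ_i p i * exp (L i / (λ+κ))) : λ ≥ 0 }. -/

import Mathlib

open Real Finset Filter

namespace KLDualAux


lemma term_ineq {a q Z : ℝ} (ha : 0 < a) (hq : 0 ≤ q) (hZ : 0 < Z) :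
    q * Real.log (a / q) ≤ a / Z - q + q * Real.log Z := by
  rcases hq.eq_or_lt with h | h
  · rw [← h]; simp; positivity
  · have hlog : Real.log (a / q) = Real.log (a / (Z * q)) + Real.log Z := by
      rw [← Real.log_mul (by positivity) hZ.ne']
      congr 1
      field_simp
    rw [hlog, mul_add]
    have h1 : Real.log (a / (Z * q)) ≤ a / (Z * q) - 1 :=
      Real.log_le_sub_one_of_pos (by positivity)
    have h2 : q * Real.log (a / (Z * q)) ≤ q * (a / (Z * q) - 1) :=
      mul_le_mul_of_nonneg_left h1 h.le
    have h3 : q * (a / (Z * q) - 1) = a / Z - q := by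
      field_simp
    linarith

lemma gibbs {n : ℕ} [Nonempty (Fin n)] (a q : Fin n → ℝ) (ha : ∀ i, 0 < a i)
    (hq0 : ∀ i, 0 ≤ q i) (hq1 : ∑ i, q i = 1) :
    ∑ i, q i * Real.log (a i / q i) ≤ Real.log (∑ i, a i) := by
  have hZ : 0 < ∑ i, a i := Finset.sum_pos (fun i _ => ha i) Finset.univ_nonempty
  calc ∑ i, q i * Real.log (a i / q i)
      ≤ ∑ i, (a i / (∑ j, a j) - q i + q i * Real.log (∑ j, a j)) :=
        Finset.sum_le_sum (fun i _ => term_ineq (ha i) (hq0 i) hZ)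
    _ = Real.log (∑ i, a i) := by
        rw [Finset.sum_add_distrib, Finset.sum_sub_distrib, ← Finset.sum_div,
          ← Finset.sum_mul, hq1, div_self hZ.ne']
        ring

/-- Key identity turning the tilted objective into the Gibbs form. -/
lemma shift_identity {n : ℕ} (p L q : Fin n → ℝ) (hp : ∀ i, 0 < p i)
    (hq0 : ∀ i, 0 ≤ q i) {β : ℝ} (hβ : 0 < β) :
    (∑ i, q i * L i) - β * ∑ i, q i * Real.log (q i / p i)
      = β * ∑ i, q i * Real.log (p i * Real.exp (L i / β) / q i) := by
  rw [Finset.mul_sum, Finset.mul_sum, ← Finset.sum_sub_distrib]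
  refine Finset.sum_congr rfl fun i _ => ?_
  rcases (hq0 i).eq_or_lt with h | h
  · rw [← h]; ring
  · rw [Real.log_div (mul_pos (hp i) (Real.exp_pos _)).ne' h.ne', Real.log_div h.ne' (hp i).ne',
      Real.log_mul (hp i).ne' (Real.exp_pos _).ne', Real.log_exp]
    field_simp
    ring


variable {n : ℕ} (p L : Fin n → ℝ) (κ : ℝ)


variable {n : ℕ} (p L : Fin n → ℝ) (κ : ℝ)

noncomputable def Zf (l : ℝ) : ℝ := ∑ i, p i * Real.exp (L i / (l + κ))
noncomputable def qf (l : ℝ) (i : Fin n) : ℝ :=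
  p i * Real.exp (L i / (l + κ)) / Zf p L κ l
noncomputable def hf (l : ℝ) : ℝ :=
  ∑ i, qf p L κ l i * Real.log (qf p L κ l i / p i)

lemma Zf_pos [Nonempty (Fin n)] (hp : ∀ i, 0 < p i) (l : ℝ) : 0 < Zf p L κ l :=
  Finset.sum_pos (fun i _ => mul_pos (hp i) (Real.exp_pos _)) Finset.univ_nonempty

lemma qf_pos [Nonempty (Fin n)] (hp : ∀ i, 0 < p i) (l : ℝ) (i : Fin n) :
    0 < qf p L κ l i :=
  div_pos (mul_pos (hp i) (Real.exp_pos _)) (Zf_pos p L κ hp l)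

lemma qf_sum [Nonempty (Fin n)] (hp : ∀ i, 0 < p i) (l : ℝ) :
    ∑ i, qf p L κ l i = 1 := by
  unfold qf
  rw [← Finset.sum_div]
  exact div_self (Zf_pos p L κ hp l).ne'

lemma log_qf [Nonempty (Fin n)] (hp : ∀ i, 0 < p i) (l : ℝ) (i : Fin n) :
    Real.log (qf p L κ l i / p i) = L i / (l + κ) - Real.log (Zf p L κ l) := by
  have hZ := Zf_pos p L κ hp l
  have h1 : qf p L κ l i / p i = Real.exp (L i / (l + κ)) / Zf p L κ l := by
    unfold qf
    field_simp [(hp i).ne', hZ.ne']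
  rw [h1, Real.log_div (Real.exp_pos _).ne' hZ.ne', Real.log_exp]

lemma hf_eq [Nonempty (Fin n)] (hp : ∀ i, 0 < p i) {l : ℝ} (hl : 0 < l + κ) :
    (∑ i, qf p L κ l i * L i) - (l + κ) * hf p L κ l
      = (l + κ) * Real.log (Zf p L κ l) := by
  have h1 : hf p L κ l
      = (∑ i, qf p L κ l i * L i) / (l + κ) - Real.log (Zf p L κ l) := by
    unfold hf
    rw [Finset.sum_congr rfl fun i _ => by
      rw [log_qf p L κ hp l i, mul_sub]]
    rw [Finset.sum_sub_distrib, ← Finset.sum_mul, qf_sum p L κ hp l, one_mul]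
    congr 1
    rw [Finset.sum_div]
    exact Finset.sum_congr rfl fun i _ => by rw [mul_div_assoc]
  rw [h1]
  field_simp
  ring




lemma hf_continuousOn [Nonempty (Fin n)] (hp : ∀ i, 0 < p i) (hκ : 0 < κ) :
    ContinuousOn (hf p L κ) (Set.Ici 0) := by
  have hβ : ∀ l ∈ Set.Ici (0:ℝ), l + κ ≠ 0 := fun l hl => by
    have h0 : (0:ℝ) ≤ l := hl
    linarith
  have cA : ∀ i : Fin n,
      ContinuousOn (fun l => p i * Real.exp (L i / (l + κ))) (Set.Ici 0) := fun i =>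
    continuousOn_const.mul (Real.continuous_exp.comp_continuousOn
      (continuousOn_const.div ((continuous_id.add continuous_const).continuousOn) hβ))
  have cZ : ContinuousOn (Zf p L κ) (Set.Ici 0) := by
    unfold Zf
    exact continuousOn_finset_sum _ fun i _ => cA i
  have cq : ∀ i : Fin n, ContinuousOn (fun l => qf p L κ l i) (Set.Ici 0) := fun i =>
    (cA i).div cZ (fun l _ => (Zf_pos p L κ hp l).ne')
  unfold hf
  exact continuousOn_finset_sum _ fun i _ => (cq i).mul
    (((cq i).div_const _).log fun l _ => (div_pos (qf_pos p L κ hp l i) (hp i)).ne')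

lemma hf_tendsto [Nonempty (Fin n)] (hp : ∀ i, 0 < p i) (hp_sum : ∑ i, p i = 1) :
    Tendsto (hf p L κ) atTop (nhds 0) := by
  have t1 : Tendsto (fun l : ℝ => l + κ) atTop atTop :=
    tendsto_atTop_add_const_right _ κ tendsto_id
  have tA : ∀ i : Fin n,
      Tendsto (fun l => p i * Real.exp (L i / (l + κ))) atTop (nhds (p i)) := by
    intro i
    have h1 : Tendsto (fun l : ℝ => L i / (l + κ)) atTop (nhds 0) :=
      Tendsto.div_atTop tendsto_const_nhds t1
    have h2 : Tendsto (fun l : ℝ => Real.exp (L i / (l + κ))) atTop (nhds 1) := by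
      have := (Real.continuous_exp.tendsto 0).comp h1
      simpa [Function.comp_def] using this
    have h3 := (tendsto_const_nhds (x := p i)).mul h2
    simpa using h3
  have tZ : Tendsto (Zf p L κ) atTop (nhds 1) := by
    have := tendsto_finset_sum Finset.univ (fun i (_ : i ∈ Finset.univ) => tA i)
    rw [hp_sum] at this
    exact this
  have tq : ∀ i : Fin n, Tendsto (fun l => qf p L κ l i) atTop (nhds (p i)) := fun i => by
    have := (tA i).div tZ one_ne_zero
    rw [div_one] at this; exact this
  have tlog : ∀ i : Fin n,
      Tendsto (fun l => Real.log (qf p L κ l i / p i)) atTop (nhds 0) := fun i => by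
    have h1 : Tendsto (fun l => qf p L κ l i / p i) atTop (nhds 1) := by
      have := (tq i).div_const (p i)
      simpa [div_self (hp i).ne'] using this
    have := (Real.continuousAt_log one_ne_zero).tendsto.comp h1
    simpa [Function.comp_def] using this
  have := tendsto_finset_sum (Finset.univ : Finset (Fin n))
    (fun i (_ : i ∈ Finset.univ) => (tq i).mul (tlog i))
  unfold hf
  simpa using this

lemma exists_lam [Nonempty (Fin n)] (hp : ∀ i, 0 < p i) (hp_sum : ∑ i, p i = 1)
    (hκ : 0 < κ) {ε : ℝ} (hε : 0 < ε) :
    ∃ l : ℝ, 0 ≤ l ∧ hf p L κ l ≤ ε ∧ l * hf p L κ l = l * ε := by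
  by_cases hc : hf p L κ 0 ≤ ε
  · exact ⟨0, le_refl 0, hc, by ring⟩
  · push_neg at hc
    have th := hf_tendsto p L κ hp hp_sum
    have hev : ∀ᶠ l in atTop, hf p L κ l < ε := (tendsto_order.1 th).2 ε hε
    obtain ⟨M, hM0, hMε⟩ := ((eventually_ge_atTop (0:ℝ)).and hev).exists
    have hcont : ContinuousOn (hf p L κ) (Set.Icc 0 M) :=
      (hf_continuousOn p L κ hp hκ).mono Set.Icc_subset_Ici_self
    have hmem : ε ∈ Set.Icc (hf p L κ M) (hf p L κ 0) := ⟨hMε.le, hc.le⟩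
    obtain ⟨l, hl, hfl⟩ := intermediate_value_Icc' hM0 hcont hmem
    exact ⟨l, hl.1, by rw [hfl], by rw [hfl]⟩


end KLDualAux

/-- KL-case of the DRO duality (Theorem A.1, KL case):
the constrained supremum of the penalized linear objective over the KL ball
equals the infimum of the log-sum-exp dual objective over `λ ≥ 0`. -/
theorem kl_dro_duality (n : ℕ) (hn : 1 ≤ n) (p : Fin n → ℝ)
    (hp_pos : ∀ i, 0 < p i) (hp_sum : ∑ i, p i = 1)
    (L : Fin n → ℝ) (ε κ : ℝ) (hε : 0 < ε) (hκ : 0 < κ) :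
    sSup {x : ℝ | ∃ q : Fin n → ℝ, (∀ i, 0 ≤ q i) ∧ (∑ i, q i = 1) ∧
        (∑ i, q i * Real.log (q i / p i)) ≤ ε ∧
        x = (∑ i, q i * L i) - κ * (∑ i, q i * Real.log (q i / p i))} =
    sInf {x : ℝ | ∃ lam : ℝ, 0 ≤ lam ∧
        x = lam * ε + (lam + κ) * Real.log (∑ i, p i * Real.exp (L i / (lam + κ)))} := by
  haveI : Nonempty (Fin n) := ⟨⟨0, hn⟩⟩
  open KLDualAux in
  set S := {x : ℝ | ∃ q : Fin n → ℝ, (∀ i, 0 ≤ q i) ∧ (∑ i, q i = 1) ∧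
      (∑ i, q i * Real.log (q i / p i)) ≤ ε ∧
      x = (∑ i, q i * L i) - κ * (∑ i, q i * Real.log (q i / p i))} with hSdef
  set D := {x : ℝ | ∃ lam : ℝ, 0 ≤ lam ∧
      x = lam * ε + (lam + κ) * Real.log (∑ i, p i * Real.exp (L i / (lam + κ)))} with hDdef
  -- weak duality
  have wd : ∀ x ∈ S, ∀ y ∈ D, x ≤ y := by
    rintro x ⟨q, hq0, hq1, hqKL, rfl⟩ y ⟨l, hl, rfl⟩
    have hβ : 0 < l + κ := by linarith
    have key : (∑ i, q i * L i) - (l + κ) * (∑ i, q i * Real.log (q i / p i))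
        ≤ (l + κ) * Real.log (∑ i, p i * Real.exp (L i / (l + κ))) := by
      rw [KLDualAux.shift_identity p L q hp_pos hq0 hβ]
      exact mul_le_mul_of_nonneg_left
        (KLDualAux.gibbs _ q (fun i => mul_pos (hp_pos i) (Real.exp_pos _)) hq0 hq1) hβ.le
    have h2 : l * (∑ i, q i * Real.log (q i / p i)) ≤ l * ε :=
      mul_le_mul_of_nonneg_left hqKL hl
    linarith
  -- optimal multiplier
  obtain ⟨l, hl0, hlε, hlprod⟩ := KLDualAux.exists_lam p L κ hp_pos hp_sum hκ hε
  have hβ : 0 < l + κ := by linarith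
  have hZeq : (∑ i, p i * Real.exp (L i / (l + κ))) = KLDualAux.Zf p L κ l := rfl
  set x₀ := l * ε + (l + κ) * Real.log (∑ i, p i * Real.exp (L i / (l + κ))) with hx₀
  have hx₀D : x₀ ∈ D := ⟨l, hl0, rfl⟩
  have hx₀S : x₀ ∈ S := by
    refine ⟨KLDualAux.qf p L κ l, fun i => (KLDualAux.qf_pos p L κ hp_pos l i).le,
      KLDualAux.qf_sum p L κ hp_pos l, hlε, ?_⟩
    have heq := KLDualAux.hf_eq p L κ hp_pos hβ
    have hfd : (∑ i, KLDualAux.qf p L κ l i * Real.log (KLDualAux.qf p L κ l i / p i))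
        = KLDualAux.hf p L κ l := rfl
    rw [hfd, hx₀, hZeq]
    linarith
  have h1 : sSup S = x₀ :=
    le_antisymm (csSup_le ⟨x₀, hx₀S⟩ fun x hx => wd x hx x₀ hx₀D)
      (le_csSup ⟨x₀, fun x hx => wd x hx x₀ hx₀D⟩ hx₀S)
  have h2 : sInf D = x₀ :=
    le_antisymm (csInf_le ⟨x₀, fun y hy => wd x₀ hx₀S y hy⟩ hx₀D)
      (le_csInf ⟨x₀, hx₀D⟩ fun y hy => wd x₀ hx₀S y hy)
  rw [h1, h2]
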